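/- arXiv:1707.06080 — 3 statements merged into one kernel-verified Lean document; each statement's English description precedes it below -/
import Mathlib

section
/- Let α be irrational with denominators (q_n), let F = 1_{[0,1/2)} − 1_{[1/2,1)} on the circle ℝ/ℤ, and let F^{(q_n)}(x) = ∑_{j=0}^{q_n−1} F(x + jα mod 1). If q_n is odd and q_n·‖q_n α‖ < 1/2, then F^{(q_n)}(x) ∈ {−1, +1} for all x. -/
/-- The distance from a real number to the nearest integer. -/
noncomputable def distInt (x : ℝ) : ℝ := ⨅ m : ℤ, |x - m|

lemma distInt_eq_round (x : ℝ) : distInt x = |x - round x| := by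
  have hbdd : BddBelow (Set.range fun m : ℤ => |x - (m : ℝ)|) := by
    refine ⟨0, ?_⟩
    rintro y ⟨m, rfl⟩
    exact abs_nonneg _
  refine le_antisymm (ciInf_le hbdd (round x)) (le_ciInf fun m => ?_)
  by_cases h : m = round x
  · rw [h]
  · have h1 : |x - (round x : ℝ)| ≤ 1 / 2 := abs_sub_round x
    have h2 : (1 : ℝ) ≤ |(m : ℝ) - (round x : ℝ)| := by
      have : (1 : ℤ) ≤ |m - round x| := Int.one_le_abs (by omega)
      calc (1:ℝ) = ((1:ℤ):ℝ) := by norm_num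
        _ ≤ ((|m - round x| : ℤ) : ℝ) := by exact_mod_cast this
        _ = |(m:ℝ) - (round x:ℝ)| := by push_cast [Int.cast_abs]; ring_nf
    have h3 : |(m : ℝ) - (round x : ℝ)| ≤ |x - m| + |x - (round x : ℝ)| := by
      calc |(m:ℝ) - round x| = |(x - round x) - (x - m)| := by ring_nf
        _ ≤ |x - round x| + |x - m| := abs_sub _ _
        _ = |x - m| + |x - round x| := by ring
    linarith

/-- The function `F = 1_{[0,1/2)} - 1_{[1/2,1)}` on the circle, as a 1-periodic
function on `ℝ`. -/
noncomputable def Fhalf (x : ℝ) : ℝ := if Int.fract x < 1/2 then 1 else -1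

lemma Fhalf_add_half (y : ℝ) : Fhalf (y + 1/2) = -Fhalf y := by
  have hy0 := Int.fract_nonneg y
  have hy1 := Int.fract_lt_one y
  have key : Int.fract (y + 1/2) = Int.fract (Int.fract y + 1/2) := by
    conv_lhs => rw [← Int.floor_add_fract y]
    rw [add_assoc, Int.fract_intCast_add]
  unfold Fhalf
  by_cases h : Int.fract y < 1/2
  · have : Int.fract (y + 1/2) = Int.fract y + 1/2 := by
      rw [key, Int.fract_eq_self.mpr ⟨by linarith, by linarith⟩]
    rw [this, if_pos h, if_neg (by linarith)]
  · have : Int.fract (y + 1/2) = Int.fract y - 1/2 := by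
      rw [key, show Int.fract y + 1/2 = (1:ℤ) + (Int.fract y - 1/2) by push_cast; ring,
        Int.fract_intCast_add, Int.fract_eq_self.mpr ⟨by linarith [not_lt.mp h], by linarith⟩]
    rw [this, if_neg h, if_pos (by linarith), neg_neg]

lemma sum_Fhalf (α x : ℝ) (q : ℕ) :
    ∑ j ∈ Finset.range q, Fhalf (x + (j:ℝ) * α) =
      2 * ((Finset.range q).filter (fun j : ℕ => Int.fract (x + (j:ℝ) * α) < 1/2)).card - q := by
  classical
  have h1 : ∑ j ∈ Finset.range q, Fhalf (x + (j:ℝ) * α) =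
      ∑ j ∈ Finset.range q, (if Int.fract (x + (j:ℝ)*α) < 1/2 then (1:ℝ) else -1) := rfl
  rw [h1, Finset.sum_ite, Finset.sum_const, Finset.sum_const]
  have hcard : ((Finset.range q).filter (fun j : ℕ => Int.fract (x + (j:ℝ)*α) < 1/2)).card
      + ((Finset.range q).filter (fun j : ℕ => ¬ Int.fract (x + (j:ℝ)*α) < 1/2)).card = q := by
    rw [Finset.card_filter_add_card_filter_not, Finset.card_range]
  have h2 : (((Finset.range q).filter (fun j : ℕ => ¬ Int.fract (x + (j:ℝ)*α) < 1/2)).card : ℝ)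
      = (q : ℝ) - ((Finset.range q).filter (fun j : ℕ => Int.fract (x + (j:ℝ)*α) < 1/2)).card := by
    have h3 : (((Finset.range q).filter (fun j : ℕ => Int.fract (x + (j:ℝ)*α) < 1/2)).card : ℝ)
        + ((Finset.range q).filter (fun j : ℕ => ¬ Int.fract (x + (j:ℝ)*α) < 1/2)).card = q := by
      exact_mod_cast congrArg (Nat.cast (R := ℝ)) hcard
    linarith
  rw [nsmul_eq_mul, nsmul_eq_mul, h2]
  ring

lemma key_count (q k : ℕ) (hq : q = 2*k+1) (p u : ℤ)
    (hu : p * u ≡ 1 [ZMOD (q:ℤ)]) (α β x : ℝ)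
    (hβ : (q:ℝ) * |β| < 1/2) (hqα : (q:ℝ) * α = p + β) :
    k ≤ ((Finset.range q).filter (fun j : ℕ => Int.fract (x + (j:ℝ)*α) < 1/2)).card := by
  classical
  have hq0 : (0:ℝ) < q := by
    have : 0 < q := by omega
    exact_mod_cast this
  have hqzpos : (0:ℤ) < (q:ℤ) := by exact_mod_cast hq0
  have hqz : (q:ℤ) ≠ 0 := hqzpos.ne'
  have hq2 : (q:ℝ)/2 = (k:ℝ) + 1/2 := by
    rw [hq]; push_cast; ring
  set y := (q:ℝ)*x with hy
  set N := ⌊y⌋ with hN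
  set fy := Int.fract y with hfy
  have hfy0 : 0 ≤ fy := Int.fract_nonneg y
  have hfy1 : fy < 1 := Int.fract_lt_one y
  have hNfy : (N:ℝ) + fy = (q:ℝ)*x := by rw [hN, hfy]; exact Int.floor_add_fract y
  have habs : 0 ≤ |β| := abs_nonneg β
  -- choose the starting residue and establish the case bounds
  obtain ⟨a₀, ha₀0, hbound⟩ :
      ∃ a₀ : ℤ, 0 ≤ a₀ ∧ ∀ i j : ℕ, i < k → j < q →
        0 ≤ (a₀:ℝ) + (i:ℝ) + fy + (j:ℝ)*β ∧ (a₀:ℝ) + (i:ℝ) + fy + (j:ℝ)*β < (q:ℝ)/2 := by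
    by_cases hb : 0 ≤ β
    · refine ⟨0, le_refl _, fun i j hi hj => ?_⟩
      have hik : (i:ℝ) + 1 ≤ (k:ℝ) := by exact_mod_cast hi
      have hjq : (j:ℝ) ≤ (q:ℝ) := by
        have : j ≤ q := hj.le
        exact_mod_cast this
      have hjβ0 : 0 ≤ (j:ℝ)*β := mul_nonneg (Nat.cast_nonneg j) hb
      have hjβ : (j:ℝ)*β ≤ (q:ℝ)*|β| := by
        have hββ : β ≤ |β| := le_abs_self β
        nlinarith [mul_nonneg (Nat.cast_nonneg (α := ℝ) j) (sub_nonneg.mpr hββ),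
          mul_nonneg (sub_nonneg.mpr hjq) habs]
      constructor
      · push_cast; linarith
      · push_cast; linarith
    · push_neg at hb
      have hβabs : |β| = -β := abs_of_neg hb
      by_cases hcase : ((q:ℝ)-1)*(-β) ≤ fy
      · refine ⟨0, le_refl _, fun i j hi hj => ?_⟩
        have hik : (i:ℝ) + 1 ≤ (k:ℝ) := by exact_mod_cast hi
        have hjq : (j:ℝ) ≤ (q:ℝ) - 1 := by
          have : j + 1 ≤ q := hj
          have := (Nat.cast_le (α := ℝ)).mpr this
          push_cast at this; linarith
        have hjβlo : ((q:ℝ)-1)*β ≤ (j:ℝ)*β := by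
          nlinarith [mul_nonneg (sub_nonneg.mpr hjq) (neg_nonneg.mpr hb.le)]
        have hjβ0 : (j:ℝ)*β ≤ 0 := mul_nonpos_of_nonneg_of_nonpos (Nat.cast_nonneg j) hb.le
        constructor
        · push_cast; linarith
        · push_cast; linarith
      · push_neg at hcase
        refine ⟨1, by norm_num, fun i j hi hj => ?_⟩
        have hik : (i:ℝ) + 1 ≤ (k:ℝ) := by exact_mod_cast hi
        have hjq : (j:ℝ) ≤ (q:ℝ) - 1 := by
          have : j + 1 ≤ q := hj
          have := (Nat.cast_le (α := ℝ)).mpr this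
          push_cast at this; linarith
        have hjβlo : ((q:ℝ)-1)*β ≤ (j:ℝ)*β := by
          nlinarith [mul_nonneg (sub_nonneg.mpr hjq) (neg_nonneg.mpr hb.le)]
        have hjβ0 : (j:ℝ)*β ≤ 0 := mul_nonpos_of_nonneg_of_nonpos (Nat.cast_nonneg j) hb.le
        have hsmall2 : ((q:ℝ)-1)*(-β) < 1/2 := by
          have : ((q:ℝ)-1)*(-β) ≤ (q:ℝ)*(-β) := by nlinarith [hb.le]
          rw [hβabs] at hβ; linarith
        constructor
        · push_cast; linarith
        · push_cast; linarith
  -- the injection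
  set f : ℕ → ℕ := fun i => ((a₀ + (i:ℤ) - N) * u % (q:ℤ)).toNat with hf
  have hmem : ∀ i ∈ Finset.range k,
      f i ∈ (Finset.range q).filter (fun j : ℕ => Int.fract (x + (j:ℝ)*α) < 1/2) := by
    intro i hik
    rw [Finset.mem_range] at hik
    set z := (a₀ + (i:ℤ) - N) * u with hz
    have hz0 : 0 ≤ z % (q:ℤ) := Int.emod_nonneg z hqz
    have hzq : z % (q:ℤ) < (q:ℤ) := Int.emod_lt_of_pos z hqzpos
    have hjz : ((f i : ℕ) : ℤ) = z % (q:ℤ) := Int.toNat_of_nonneg hz0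
    have hjq : f i < q := by
      have : ((f i : ℕ) : ℤ) < (q:ℤ) := by rw [hjz]; exact hzq
      exact_mod_cast this
    have hjm : ((f i : ℕ) : ℤ) ≡ z [ZMOD (q:ℤ)] := by
      show ((f i : ℕ) : ℤ) % (q:ℤ) = z % (q:ℤ)
      rw [hjz, Int.emod_emod_of_dvd z dvd_rfl]
    have hjp : ((f i : ℕ) : ℤ) * p ≡ a₀ + (i:ℤ) - N [ZMOD (q:ℤ)] := by
      calc ((f i : ℕ) : ℤ) * p ≡ z * p [ZMOD (q:ℤ)] := hjm.mul_right p
        _ = (a₀ + (i:ℤ) - N) * (p * u) := by rw [hz]; ring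
        _ ≡ (a₀ + (i:ℤ) - N) * 1 [ZMOD (q:ℤ)] := Int.ModEq.mul_left _ hu
        _ = a₀ + (i:ℤ) - N := by ring
    obtain ⟨t, ht⟩ : ∃ t : ℤ, (a₀ + (i:ℤ) - N) - ((f i : ℕ) : ℤ) * p = (q:ℤ)*t := by
      exact hjp.dvd
    have ht' : ((a₀:ℝ) + (i:ℝ) - (N:ℝ)) - ((f i : ℕ) : ℝ)*(p:ℝ) = (q:ℝ)*(t:ℝ) := by
      exact_mod_cast ht
    set v := (a₀:ℝ) + (i:ℝ) + fy + ((f i : ℕ):ℝ)*β with hv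
    obtain ⟨hv0, hv1⟩ := hbound i (f i) hik hjq
    have hkey : x + ((f i : ℕ):ℝ)*α - ((-t : ℤ):ℝ) = v / (q:ℝ) := by
      rw [eq_div_iff hq0.ne']
      push_cast
      linear_combination ((f i : ℕ):ℝ) * hqα - hNfy - ht'
    have hfract : Int.fract (x + ((f i : ℕ):ℝ)*α) = v / (q:ℝ) := by
      have h5 : x + ((f i : ℕ):ℝ)*α = ((-t : ℤ):ℝ) + v/(q:ℝ) := by linarith [hkey]
      rw [h5, Int.fract_intCast_add]
      refine Int.fract_eq_self.mpr ⟨div_nonneg hv0 hq0.le, ?_⟩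
      rw [div_lt_one hq0]
      linarith
    refine Finset.mem_filter.mpr ⟨Finset.mem_range.mpr hjq, ?_⟩
    rw [hfract, div_lt_iff₀ hq0]
    linarith
  have hinj : Set.InjOn f (Finset.range k) := by
    intro i hi i' hi' heq
    simp only [Finset.coe_range, Set.mem_Iio] at hi hi'
    have e0 : ((a₀ + (i:ℤ) - N) * u % (q:ℤ)) = ((a₀ + (i':ℤ) - N) * u % (q:ℤ)) := by
      have h1 := congrArg (fun m : ℕ => (m:ℤ)) heq
      simp only [hf] at h1
      rwa [Int.toNat_of_nonneg (Int.emod_nonneg _ hqz),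
        Int.toNat_of_nonneg (Int.emod_nonneg _ hqz)] at h1
    have e : (a₀ + (i:ℤ) - N) * u ≡ (a₀ + (i':ℤ) - N) * u [ZMOD (q:ℤ)] := by
      show _ % _ = _ % _
      exact e0
    have h3 : (a₀ + (i:ℤ) - N) ≡ (a₀ + (i':ℤ) - N) [ZMOD (q:ℤ)] := by
      calc a₀ + (i:ℤ) - N = (a₀ + (i:ℤ) - N) * 1 := by ring
        _ ≡ (a₀ + (i:ℤ) - N) * (p*u) [ZMOD (q:ℤ)] := Int.ModEq.mul_left _ hu.symm
        _ = ((a₀ + (i:ℤ) - N) * u) * p := by ring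
        _ ≡ ((a₀ + (i':ℤ) - N) * u) * p [ZMOD (q:ℤ)] := e.mul_right p
        _ = (a₀ + (i':ℤ) - N) * (p*u) := by ring
        _ ≡ (a₀ + (i':ℤ) - N) * 1 [ZMOD (q:ℤ)] := Int.ModEq.mul_left _ hu
        _ = a₀ + (i':ℤ) - N := by ring
    have h4 : (i:ℤ) ≡ (i':ℤ) [ZMOD (q:ℤ)] := by
      have h5 := h3.add_right (N - a₀)
      rw [show a₀ + (i:ℤ) - N + (N - a₀) = (i:ℤ) by ring,
        show a₀ + (i':ℤ) - N + (N - a₀) = (i':ℤ) by ring] at h5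
      exact h5
    have h5 : (i:ℤ) % (q:ℤ) = (i':ℤ) % (q:ℤ) := h4
    have hiq : (i:ℤ) < (q:ℤ) := by exact_mod_cast show i < q by omega
    have hiq' : (i':ℤ) < (q:ℤ) := by exact_mod_cast show i' < q by omega
    rw [Int.emod_eq_of_lt (Int.ofNat_nonneg i) hiq,
      Int.emod_eq_of_lt (Int.ofNat_nonneg i') hiq'] at h5
    exact_mod_cast h5
  calc (k:ℕ) = (Finset.range k).card := (Finset.card_range k).symm
    _ ≤ _ := Finset.card_le_card_of_injOn f hmem hinj

lemma of_not_terminatedAt (α : ℝ) (hα : Irrational α) (m : ℕ) :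
    ¬(GenContFract.of α).TerminatedAt m := by
  intro h
  obtain ⟨r, hr⟩ := (GenContFract.terminates_iff_rat α).mp ⟨m, h⟩
  exact hα ⟨r, hr.symm⟩

lemma contsAux_int (α : ℝ) : ∀ m : ℕ,
    (∃ a b : ℤ, ((GenContFract.of α).contsAux m).a = (a:ℝ) ∧
      ((GenContFract.of α).contsAux m).b = (b:ℝ)) ∧
    (∃ a b : ℤ, ((GenContFract.of α).contsAux (m+1)).a = (a:ℝ) ∧
      ((GenContFract.of α).contsAux (m+1)).b = (b:ℝ)) := by
  intro m
  induction m with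
  | zero =>
    constructor
    · exact ⟨1, 0, by rw [GenContFract.zeroth_contAux_eq_one_zero]; norm_num,
        by rw [GenContFract.zeroth_contAux_eq_one_zero]; norm_num⟩
    · exact ⟨⌊α⌋, 1, by rw [GenContFract.first_contAux_eq_h_one,
          GenContFract.of_h_eq_floor],
        by rw [GenContFract.first_contAux_eq_h_one]; norm_num⟩
  | succ m ih =>
    refine ⟨ih.2, ?_⟩
    rcases hs : (GenContFract.of α).s.get? m with _ | gp
    · have hterm : (GenContFract.of α).TerminatedAt m := hs
      rw [GenContFract.contsAux_stable_step_of_terminated hterm]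
      exact ih.2
    · obtain ⟨hga, z, hz⟩ := GenContFract.of_partNum_eq_one_and_exists_int_partDen_eq hs
      obtain ⟨⟨a2, b2, ha2, hb2⟩, ⟨a1, b1, ha1, hb1⟩⟩ := ih
      rw [GenContFract.contsAux_recurrence hs rfl rfl]
      refine ⟨z*a1 + a2, z*b1 + b2, ?_, ?_⟩
      · show gp.b * _ + gp.a * _ = _
        rw [hga, hz, ha1, ha2]; push_cast; ring
      · show gp.b * _ + gp.a * _ = _
        rw [hga, hz, hb1, hb2]; push_cast; ring

lemma round_coprime (α : ℝ) (hα : Irrational α) (n q : ℕ)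
    (hq : (q : ℝ) = (GenContFract.of α).dens n) (hq1 : 1 ≤ q)
    (hsm : |(q:ℝ)*α - round ((q:ℝ)*α)| < 1/(2*q)) :
    IsCoprime (round ((q:ℝ)*α)) (q:ℤ) := by
  rcases eq_or_lt_of_le hq1 with h1 | h2
  · have : (q:ℤ) = 1 := by omega
    rw [this]
    exact isCoprime_one_right
  -- now 2 ≤ q
  have hq2 : (2:ℝ) ≤ (q:ℝ) := by exact_mod_cast h2
  have hq0 : (0:ℝ) < (q:ℝ) := by linarith
  have hnt := of_not_terminatedAt α hα
  obtain ⟨a, b, ha, hb⟩ := (contsAux_int α (n+1)).1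
  obtain ⟨a', b', ha', hb'⟩ := (contsAux_int α (n+1)).2
  have hnums : (GenContFract.of α).nums n = (a:ℝ) := by
    rw [GenContFract.num_eq_conts_a, GenContFract.nth_cont_eq_succ_nth_contAux]; exact ha
  have hdens : (GenContFract.of α).dens n = (b:ℝ) := by
    rw [GenContFract.den_eq_conts_b, GenContFract.nth_cont_eq_succ_nth_contAux]; exact hb
  have hnums' : (GenContFract.of α).nums (n+1) = (a':ℝ) := by
    rw [GenContFract.num_eq_conts_a, GenContFract.nth_cont_eq_succ_nth_contAux]; exact ha'
  have hdens' : (GenContFract.of α).dens (n+1) = (b':ℝ) := by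
    rw [GenContFract.den_eq_conts_b, GenContFract.nth_cont_eq_succ_nth_contAux]; exact hb'
  have hbq : (b:ℤ) = (q:ℤ) := by
    have : (b:ℝ) = (q:ℝ) := by rw [← hdens, ← hq]
    exact_mod_cast this
  -- determinant
  have hcoe : (↑(SimpContFract.of α) : GenContFract ℝ) = GenContFract.of α := rfl
  have hdet := SimpContFract.determinant (s := SimpContFract.of α) (n := n)
    (by rw [hcoe]; exact hnt n)
  rw [hcoe, hnums, hdens', hdens, hnums'] at hdet
  have hdetz : a * b' - b * a' = (-1)^(n+1) := by exact_mod_cast hdet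
  have hab : IsCoprime a b := by
    refine ⟨(-1)^(n+1)*b', -((-1)^(n+1)*a'), ?_⟩
    calc (-1)^(n+1)*b' * a + -((-1)^(n+1)*a') * b
        = (-1)^(n+1) * (a*b' - b*a') := by ring
      _ = (-1)^(n+1) * (-1)^(n+1) := by rw [hdetz]
      _ = 1 := by rw [← pow_add, ← two_mul, pow_mul]; norm_num
  -- denominators bounds
  have hDb : (q:ℝ) ≤ (b':ℝ) := by
    rw [← hdens', hq]
    exact GenContFract.of_den_mono
  have hD0 : (0:ℝ) < (b':ℝ) := lt_of_lt_of_le hq0 hDb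
  -- approximation
  have hconv := GenContFract.abs_sub_convs_le (v := α) (n := n) (hnt n)
  rw [GenContFract.conv_eq_num_div_den, hnums, hdens', hdens] at hconv
  have hbR : (b:ℝ) = (q:ℝ) := by exact_mod_cast hbq
  rw [hbR] at hconv
  have hqa : |(q:ℝ)*α - (a:ℝ)| ≤ 1/(b':ℝ) := by
    have e1 : (q:ℝ)*α - (a:ℝ) = (q:ℝ)*(α - (a:ℝ)/(q:ℝ)) := by field_simp
    rw [e1, abs_mul, abs_of_pos hq0]
    calc (q:ℝ) * |α - (a:ℝ)/(q:ℝ)| ≤ (q:ℝ) * (1/((q:ℝ) * (b':ℝ))) :=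
        mul_le_mul_of_nonneg_left hconv hq0.le
      _ = 1/(b':ℝ) := by field_simp
  have h12 : 1/(b':ℝ) ≤ 1/2 := by
    apply one_div_le_one_div_of_le (by norm_num)
    linarith
  have hround : round ((q:ℝ)*α) = a := by
    have h7 : |((round ((q:ℝ)*α) - a : ℤ) : ℝ)| < 1 := by
      push_cast
      have htri : |(round ((q:ℝ)*α) : ℝ) - (a:ℝ)| ≤
          |(q:ℝ)*α - round ((q:ℝ)*α)| + |(q:ℝ)*α - (a:ℝ)| := by
        calc |(round ((q:ℝ)*α) : ℝ) - (a:ℝ)|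
            = |((q:ℝ)*α - (a:ℝ)) - ((q:ℝ)*α - round ((q:ℝ)*α))| := by ring_nf
          _ ≤ |(q:ℝ)*α - (a:ℝ)| + |(q:ℝ)*α - round ((q:ℝ)*α)| := abs_sub _ _
          _ = _ := by ring
      have hsm2 : 1/(2*(q:ℝ)) ≤ 1/4 := by
        apply one_div_le_one_div_of_le (by norm_num)
        linarith
      linarith
    have h8 : |round ((q:ℝ)*α) - a| < 1 := by
      have := h7
      rw [← Int.cast_abs] at this
      exact_mod_cast this
    have := abs_lt.mp h8
    omega
  rw [hround, ← hbq]
  exact hab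


/-- If `q_n` is an odd denominator of the irrational `α` with `q_n ‖q_n α‖ < 1/2`,
then the Birkhoff sum `F^{(q_n)}` takes only the values `±1`. -/
theorem birkhoff_Fhalf_pm_one_of_odd (α : ℝ) (hα : Irrational α) (n q : ℕ)
    (hq : (q : ℝ) = (GenContFract.of α).dens n) (hodd : Odd q)
    (hsmall : (q : ℝ) * distInt ((q : ℝ) * α) < 1/2) :
    ∀ x : ℝ,
      (∑ j ∈ Finset.range q, Fhalf (x + (j : ℝ) * α)) = 1 ∨
      (∑ j ∈ Finset.range q, Fhalf (x + (j : ℝ) * α)) = -1 := by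
  intro x
  classical
  obtain ⟨k, hk⟩ := hodd
  have hk' : q = 2*k+1 := hk
  have hq1 : 1 ≤ q := by omega
  have hq0 : (0:ℝ) < q := by
    have : 0 < q := by omega
    exact_mod_cast this
  set p : ℤ := round ((q:ℝ)*α) with hp
  set β : ℝ := (q:ℝ)*α - (p:ℝ) with hβdef
  have hqα : (q:ℝ)*α = (p:ℝ) + β := by rw [hβdef]; ring
  have hβ : (q:ℝ)*|β| < 1/2 := by
    rw [hβdef, hp, ← distInt_eq_round]
    exact hsmall
  have hcop : IsCoprime p (q:ℤ) := by
    rw [hp]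
    refine round_coprime α hα n q hq hq1 ?_
    have hd : distInt ((q:ℝ)*α) = |(q:ℝ)*α - round ((q:ℝ)*α)| := distInt_eq_round _
    rw [← hd]
    rw [lt_div_iff₀ (by positivity)]
    rw [hd, ← hp, ← hβdef] at hsmall ⊢
    nlinarith [abs_nonneg β]
  obtain ⟨uu, vv, huv⟩ := hcop
  have hu : p * uu ≡ 1 [ZMOD (q:ℤ)] := by
    refine (Int.modEq_iff_dvd.mpr ⟨vv, by linarith [huv]⟩).symm.symm
  have hcount : ∀ z : ℝ,
      k ≤ ((Finset.range q).filter (fun j : ℕ => Int.fract (z + (j:ℝ)*α) < 1/2)).card :=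
    fun z => key_count q k hk' p uu hu α β z hβ hqα
  set N1 := ((Finset.range q).filter (fun j : ℕ => Int.fract (x + (j:ℝ)*α) < 1/2)).card with hN1
  set N2 := ((Finset.range q).filter
    (fun j : ℕ => Int.fract ((x + 1/2) + (j:ℝ)*α) < 1/2)).card with hN2
  have hS1 : ∑ j ∈ Finset.range q, Fhalf (x + (j:ℝ)*α) = 2*(N1:ℝ) - q := sum_Fhalf α x q
  have hS2 : ∑ j ∈ Finset.range q, Fhalf ((x + 1/2) + (j:ℝ)*α) = 2*(N2:ℝ) - q :=
    sum_Fhalf α (x + 1/2) q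
  have hanti : ∑ j ∈ Finset.range q, Fhalf ((x + 1/2) + (j:ℝ)*α)
      = -∑ j ∈ Finset.range q, Fhalf (x + (j:ℝ)*α) := by
    have hcongr : ∀ j ∈ Finset.range q,
        Fhalf ((x + 1/2) + (j:ℝ)*α) = -(Fhalf (x + (j:ℝ)*α)) := by
      intro j _
      rw [show (x + 1/2) + (j:ℝ)*α = (x + (j:ℝ)*α) + 1/2 by ring, Fhalf_add_half]
    rw [Finset.sum_congr rfl hcongr, Finset.sum_neg_distrib]
  have hqk : (q:ℝ) = 2*(k:ℝ)+1 := by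
    rw [hk']; push_cast; ring
  have hk1 : (k:ℝ) ≤ (N1:ℝ) := by exact_mod_cast hcount x
  have hk2 : (k:ℝ) ≤ (N2:ℝ) := by exact_mod_cast hcount (x + 1/2)
  have hN1leR : (N1:ℝ) ≤ (k:ℝ) + 1 := by
    rw [hS1, hS2] at hanti
    linarith
  have hN1le : N1 ≤ k + 1 := by exact_mod_cast hN1leR
  have hN1ge : k ≤ N1 := by exact_mod_cast hk1
  have : N1 = k ∨ N1 = k + 1 := by omega
  rcases this with h | h
  · right
    rw [hS1, h, hqk]
    push_cast
    ring
  · left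
    rw [hS1, h, hqk]
    push_cast
    ring
end

section
/- Let α be irrational with denominators (q_n) all odd for n ≥ k_0, and let φ = 1_{[0,1/2)} − 1_{[1/2,1)} on the circle. Then there is δ > 0 such that for every integer s ≥ q_{k_0}, the L²-norm of the ergodic sum φ^{(s)}(x) = ∑_{j=0}^{s−1} φ(x+jα) satisfies ‖φ^{(s)}‖₂ ≥ δ. -/
open MeasureTheory

section NumberTheory
open GenContFract
variable {α : ℝ}

variable {α : ℝ}

theorem myNotTerm (hα : Irrational α) (n : ℕ) : ¬(GenContFract.of α).TerminatedAt n := by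
  intro h
  have : (GenContFract.of α).Terminates := ⟨n, h⟩
  obtain ⟨q, hq⟩ := (terminates_iff_rat α).mp this
  exact hα ⟨q, hq.symm⟩

theorem myIntCA (hα : Irrational α) (n : ℕ) :
    (∃ z : ℤ, ((GenContFract.of α).contsAux n).a = (z : ℝ)) ∧
      ∃ z : ℤ, ((GenContFract.of α).contsAux n).b = (z : ℝ) := by
  induction n using Nat.strong_induction_on with
  | _ n ih =>
    match n with
    | 0 => exact ⟨⟨1, by simp [contsAux]⟩, ⟨0, by simp [contsAux]⟩⟩
    | 1 => exact ⟨⟨⌊α⌋, by simp [contsAux, of_h_eq_floor]⟩, ⟨1, by simp [contsAux]⟩⟩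
    | (n + 2) =>
      obtain ⟨gp, hgp⟩ : ∃ gp, (GenContFract.of α).s.get? n = some gp :=
        Option.ne_none_iff_exists'.1 (myNotTerm hα n)
      obtain ⟨ha1, z, hz⟩ := of_partNum_eq_one_and_exists_int_partDen_eq hgp
      have hrec := contsAux_recurrence hgp rfl rfl
      obtain ⟨⟨za, hza⟩, ⟨zb, hzb⟩⟩ := ih n (by omega)
      obtain ⟨⟨wa, hwa⟩, ⟨wb, hwb⟩⟩ := ih (n + 1) (by omega)
      rw [hrec]
      constructor
      · exact ⟨z * wa + za, by push_cast; simp [ha1, hz, hza, hwa]⟩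
      · exact ⟨z * wb + zb, by push_cast; simp [ha1, hz, hzb, hwb]⟩

theorem myIntNum (hα : Irrational α) (n : ℕ) : ∃ z : ℤ, (GenContFract.of α).nums n = (z : ℝ) := by
  rw [num_eq_conts_a, nth_cont_eq_succ_nth_contAux]; exact (myIntCA hα (n+1)).1

theorem myIntDen (hα : Irrational α) (n : ℕ) : ∃ z : ℤ, (GenContFract.of α).dens n = (z : ℝ) := by
  rw [den_eq_conts_b, nth_cont_eq_succ_nth_contAux]; exact (myIntCA hα (n+1)).2

theorem myDenPos (hα : Irrational α) (n : ℕ) : (1:ℝ) ≤ (GenContFract.of α).dens n := by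
  have := succ_nth_fib_le_of_nth_den (v := α) (n := n)
    (by cases n with
        | zero => exact Or.inl rfl
        | succ m => exact Or.inr (myNotTerm hα m))
  calc (1:ℝ) = ((Nat.fib 1 : ℕ) : ℝ) := by simp
  _ ≤ ((Nat.fib (n+1) : ℕ) : ℝ) := by exact_mod_cast Nat.fib_mono (by omega)
  _ ≤ _ := this

theorem myDenMono (hα : Irrational α) : Monotone fun n => (GenContFract.of α).dens n :=
  monotone_nat_of_le_succ fun n => of_den_mono

/-- q_{n+2} ≥ q_{n+1} + q_n -/
theorem myDenRec (hα : Irrational α) (n : ℕ) :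
    (GenContFract.of α).dens (n+1) + (GenContFract.of α).dens n
      ≤ (GenContFract.of α).dens (n+2) := by
  obtain ⟨gp, hgp⟩ : ∃ gp, (GenContFract.of α).s.get? (n+1) = some gp :=
    Option.ne_none_iff_exists'.1 (myNotTerm hα (n+1))
  obtain ⟨ha1, z, hz⟩ := of_partNum_eq_one_and_exists_int_partDen_eq hgp
  have hb1 : (1:ℝ) ≤ gp.b := of_one_le_get?_partDen (partDen_eq_s_b hgp)
  have hrec := dens_recurrence hgp rfl rfl
  rw [hrec, ha1]
  have h0 : (0:ℝ) ≤ (GenContFract.of α).dens (n+1) := le_trans zero_le_one (myDenPos hα _)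
  nlinarith

/-- determinant -/
theorem myDet (hα : Irrational α) (n : ℕ) :
    (GenContFract.of α).nums n * (GenContFract.of α).dens (n+1) -
      (GenContFract.of α).dens n * (GenContFract.of α).nums (n+1) = (-1:ℝ)^(n+1) := by
  have := SimpContFract.determinant (s := ⟨GenContFract.of α, GenContFract.of_isSimpContFract α⟩)
    (n := n) (myNotTerm hα n)
  exact this

/-- θ_n = |q_n α - p_n| ≤ 1/q_{n+1} -/
theorem myThetaLe (hα : Irrational α) (n : ℕ) :
    |(GenContFract.of α).dens n * α - (GenContFract.of α).nums n|
      ≤ 1 / (GenContFract.of α).dens (n+1) := by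
  have h := abs_sub_convs_le (v := α) (n := n) (myNotTerm hα n)
  have hq : (0:ℝ) < (GenContFract.of α).dens n := lt_of_lt_of_le zero_lt_one (myDenPos hα n)
  have hq1 : (0:ℝ) < (GenContFract.of α).dens (n+1) := lt_of_lt_of_le zero_lt_one (myDenPos hα (n+1))
  have hconv : (GenContFract.of α).convs n
      = (GenContFract.of α).nums n / (GenContFract.of α).dens n := conv_eq_num_div_den
  rw [hconv] at h
  have heq : (GenContFract.of α).dens n * α - (GenContFract.of α).nums n
      = (GenContFract.of α).dens n * (α - (GenContFract.of α).nums n / (GenContFract.of α).dens n) := by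
    field_simp
  rw [heq, abs_mul, abs_of_pos hq]
  calc (GenContFract.of α).dens n * |α - (GenContFract.of α).nums n / (GenContFract.of α).dens n|
      ≤ (GenContFract.of α).dens n * (1 / ((GenContFract.of α).dens n * (GenContFract.of α).dens (n+1))) := by
        exact mul_le_mul_of_nonneg_left h (le_of_lt hq)
  _ = 1 / (GenContFract.of α).dens (n+1) := by field_simp

theorem myEpsNe (hα : Irrational α) (n : ℕ) :
    (GenContFract.of α).dens n * α - (GenContFract.of α).nums n ≠ 0 := by
  obtain ⟨p, hp⟩ := myIntNum hα n
  obtain ⟨q, hq⟩ := myIntDen hα n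
  have hqpos : (0:ℝ) < q := by rw [← hq]; exact lt_of_lt_of_le zero_lt_one (myDenPos hα n)
  intro h
  rw [hp, hq] at h
  apply hα
  refine ⟨(p : ℚ) / (q : ℚ), ?_⟩
  have hq0 : (q:ℝ) ≠ 0 := ne_of_gt hqpos
  push_cast
  field_simp at h ⊢
  linarith

theorem absAlg (a b : ℝ) (h : |a - b| = 1) (ha : |a| ≤ 1) (hb : |b| < 1) :
    |a| + |b| ≤ 1 := by
  rcases abs_cases a with ⟨ha', ha''⟩ | ⟨ha', ha''⟩ <;>
  rcases abs_cases b with ⟨hb', hb''⟩ | ⟨hb', hb''⟩ <;>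
  rcases (abs_eq (by norm_num : (0:ℝ) ≤ 1)).mp h with h' | h' <;>
  rw [ha', hb'] <;> rw [ha'] at ha <;> rw [hb'] at hb <;> linarith


theorem myKey {α : ℝ} (hα : Irrational α) (n : ℕ) :
    (GenContFract.of α).dens (n+1) * |(GenContFract.of α).dens n * α - (GenContFract.of α).nums n|
      + (GenContFract.of α).dens n *
        |(GenContFract.of α).dens (n+1) * α - (GenContFract.of α).nums (n+1)| ≤ 1 := by
  set g := GenContFract.of α
  set a := g.dens (n+1) * (g.dens n * α - g.nums n) with ha_def
  set b := g.dens n * (g.dens (n+1) * α - g.nums (n+1)) with hb_def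
  have hq0 : (0:ℝ) < g.dens n := lt_of_lt_of_le zero_lt_one (myDenPos hα n)
  have hq1 : (0:ℝ) < g.dens (n+1) := lt_of_lt_of_le zero_lt_one (myDenPos hα (n+1))
  have hq2 : (0:ℝ) < g.dens (n+2) := lt_of_lt_of_le zero_lt_one (myDenPos hα (n+2))
  have hab : |a - b| = 1 := by
    have : a - b = -(g.nums n * g.dens (n+1) - g.dens n * g.nums (n+1)) := by ring
    rw [this, myDet hα n, abs_neg, abs_pow, abs_neg, abs_one, one_pow]
  have haa : |a| ≤ 1 := by
    rw [abs_mul, abs_of_pos hq1]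
    calc g.dens (n+1) * |g.dens n * α - g.nums n| ≤ g.dens (n+1) * (1 / g.dens (n+1)) :=
          mul_le_mul_of_nonneg_left (myThetaLe hα n) hq1.le
    _ = 1 := by field_simp
  have hbb : |b| < 1 := by
    rw [abs_mul, abs_of_pos hq0]
    have h1 : |g.dens (n+1) * α - g.nums (n+1)| ≤ 1 / g.dens (n+2) := myThetaLe hα (n+1)
    have h2 : g.dens n < g.dens (n+2) := by
      have := myDenRec hα n; linarith
    calc g.dens n * |g.dens (n+1) * α - g.nums (n+1)| ≤ g.dens n * (1 / g.dens (n+2)) :=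
          mul_le_mul_of_nonneg_left h1 hq0.le
    _ = g.dens n / g.dens (n+2) := by ring
    _ < 1 := (div_lt_one hq2).mpr h2
  have := absAlg a b hab haa hbb
  rw [abs_mul, abs_mul, abs_of_pos hq1, abs_of_pos hq0] at this
  exact this

end NumberTheory

section AnalysisPart
open MeasureTheory Real

theorem Fhalf_meas : Measurable Fhalf := by
  unfold Fhalf
  exact Measurable.ite (measurableSet_lt measurable_fract measurable_const)
    measurable_const measurable_const

theorem Fhalf_abs (x : ℝ) : |Fhalf x| ≤ 1 := by
  unfold Fhalf; split <;> simp

theorem Fhalf_per : Function.Periodic Fhalf 1 := by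
  intro x; unfold Fhalf; rw [Int.fract_add_one]

-- ergodic sum
theorem f_meas (α : ℝ) (s : ℕ) :
    Measurable (fun x => ∑ j ∈ Finset.range s, Fhalf (x + (j:ℝ) * α)) := by
  exact Finset.measurable_sum _ fun j _ => Fhalf_meas.comp (measurable_id.add_const _)

theorem f_bdd (α : ℝ) (s : ℕ) (x : ℝ) :
    |∑ j ∈ Finset.range s, Fhalf (x + (j:ℝ) * α)| ≤ s := by
  calc |∑ j ∈ Finset.range s, Fhalf (x + (j:ℝ) * α)|
      ≤ ∑ j ∈ Finset.range s, |Fhalf (x + (j:ℝ) * α)| := Finset.abs_sum_le_sum_abs _ _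
  _ ≤ ∑ _j ∈ Finset.range s, (1:ℝ) := Finset.sum_le_sum fun j _ => Fhalf_abs _
  _ = s := by simp

theorem bdd_integrable {h : ℝ → ℝ} (hm : Measurable h) (C : ℝ) (hC : ∀ x, |h x| ≤ C) :
    IntegrableOn h (Set.Ico (0:ℝ) 1) := by
  refine Integrable.mono' (integrableOn_const ?_) hm.aestronglyMeasurable.restrict
    (Filter.Eventually.of_forall fun x => by simpa using hC x)
  simp [Real.volume_Ico]

/-- Bessel-type inequality -/
theorem bessel {f g : ℝ → ℝ} (hf : Measurable f) (hg : Measurable g)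
    (Cf : ℝ) (hCf : ∀ x, |f x| ≤ Cf) (Cg : ℝ) (hCg : ∀ x, |g x| ≤ Cg)
    (hgg : ∫ x in Set.Ico (0:ℝ) 1, (g x)^2 = 1/2) :
    2 * (∫ x in Set.Ico (0:ℝ) 1, f x * g x)^2 ≤ ∫ x in Set.Ico (0:ℝ) 1, (f x)^2 := by
  set L := ∫ x in Set.Ico (0:ℝ) 1, f x * g x with hL
  have hif2 : IntegrableOn (fun x => (f x)^2) (Set.Ico (0:ℝ) 1) :=
    bdd_integrable (hf.pow_const 2) (Cf^2) (fun x => by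
      rw [abs_pow]; exact pow_le_pow_left₀ (abs_nonneg _) (hCf x) 2)
  have hig2 : IntegrableOn (fun x => (g x)^2) (Set.Ico (0:ℝ) 1) :=
    bdd_integrable (hg.pow_const 2) (Cg^2) (fun x => by
      rw [abs_pow]; exact pow_le_pow_left₀ (abs_nonneg _) (hCg x) 2)
  have hifg : IntegrableOn (fun x => f x * g x) (Set.Ico (0:ℝ) 1) :=
    bdd_integrable (hf.mul hg) (Cf * Cg) (fun x => by
      rw [abs_mul]
      exact mul_le_mul (hCf x) (hCg x) (abs_nonneg _) (le_trans (abs_nonneg _) (hCf x)))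
  have key : 0 ≤ ∫ x in Set.Ico (0:ℝ) 1, (f x - 2 * L * g x)^2 :=
    integral_nonneg fun x => sq_nonneg _
  have expand : ∫ x in Set.Ico (0:ℝ) 1, (f x - 2 * L * g x)^2
      = (∫ x in Set.Ico (0:ℝ) 1, (f x)^2) - 4 * L * L + 4 * L^2 * (1/2) := by
    have : ∀ x, (f x - 2 * L * g x)^2
        = (f x)^2 - (4*L) * (f x * g x) + (4 * L^2) * (g x)^2 := by intro x; ring
    rw [integral_congr_ae (Filter.Eventually.of_forall this)]
    have h1 : IntegrableOn (fun x => f x ^ 2 - 4 * L * (f x * g x)) (Set.Ico (0:ℝ) 1) :=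
      hif2.sub (hifg.const_mul _)
    have h2 : IntegrableOn (fun x => 4 * L ^ 2 * (g x) ^ 2) (Set.Ico (0:ℝ) 1) :=
      hig2.const_mul _
    have h3 : IntegrableOn (fun x => 4 * L * (f x * g x)) (Set.Ico (0:ℝ) 1) :=
      hifg.const_mul _
    rw [integral_add h1 h2, integral_sub hif2 h3, integral_const_mul, integral_const_mul, hgg, ← hL]
  rw [expand] at key
  nlinarith

-- set integral over Ico = interval integral
theorem ico_eq_intervalIntegral (h : ℝ → ℝ) :
    ∫ x in Set.Ico (0:ℝ) 1, h x = ∫ x in (0:ℝ)..1, h x := by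
  rw [intervalIntegral.integral_of_le zero_le_one,
    MeasureTheory.integral_Ico_eq_integral_Ioo, MeasureTheory.integral_Ioc_eq_integral_Ioo]

theorem ico_eq_intervalIntegralC (h : ℝ → ℂ) :
    ∫ x in Set.Ico (0:ℝ) 1, h x = ∫ x in (0:ℝ)..1, h x := by
  rw [intervalIntegral.integral_of_le zero_le_one,
    MeasureTheory.integral_Ico_eq_integral_Ioo, MeasureTheory.integral_Ioc_eq_integral_Ioo]

/-- ∫₀¹ cos(2πm x + ψ)² = 1/2 for a nonzero integer m. -/
theorem cos_sq_integral (m : ℤ) (hm : m ≠ 0) (ψ : ℝ) :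
    ∫ x in Set.Ico (0:ℝ) 1, (Real.cos (2 * π * m * x + ψ))^2 = 1/2 := by
  rw [ico_eq_intervalIntegral]
  have hc : (2 * π * m : ℝ) ≠ 0 := by
    have := Real.pi_ne_zero
    have : (m:ℝ) ≠ 0 := Int.cast_ne_zero.mpr hm
    positivity
  have key : ∀ x : ℝ, (Real.cos (2 * π * m * x + ψ))^2
      = 1/2 + (1/2) * Real.cos (2 * (2 * π * m * x + ψ)) := by
    intro x
    have := Real.cos_sq (2 * π * m * x + ψ)
    rw [this]; ring
  rw [intervalIntegral.integral_congr (fun x _ => key x)]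
  have h1 : ∫ x in (0:ℝ)..1, (1/2 + (1/2) * Real.cos (2 * (2 * π * m * x + ψ)))
      = (∫ _x in (0:ℝ)..1, (1/2 : ℝ)) + ∫ x in (0:ℝ)..1, (1/2) * Real.cos (2 * (2 * π * m * x + ψ)) := by
    exact intervalIntegral.integral_add (μ := volume) (f := fun _ => (1/2:ℝ))
      (g := fun x => (1/2) * Real.cos (2 * (2 * π * m * x + ψ))) (by apply Continuous.intervalIntegrable; continuity)
      (by apply Continuous.intervalIntegrable; continuity)
  rw [h1]
  have h2 : ∫ _x in (0:ℝ)..1, (1/2 : ℝ) = 1/2 := by simp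
  have h3 : ∫ x in (0:ℝ)..1, Real.cos (2 * (2 * π * m * x + ψ)) = 0 := by
    have : ∀ x : ℝ, Real.cos (2 * (2 * π * m * x + ψ)) = Real.cos ((4 * π * m) * x + 2 * ψ) := by
      intro x; ring_nf
    rw [intervalIntegral.integral_congr (fun x _ => this x)]
    have hc4 : (4 * π * m : ℝ) ≠ 0 := by
      have : (m:ℝ) ≠ 0 := Int.cast_ne_zero.mpr hm
      have := Real.pi_ne_zero
      positivity
    rw [intervalIntegral.integral_comp_mul_add Real.cos hc4 (2*ψ), integral_cos]
    have e1 : Real.sin (4 * π * m * 1 + 2 * ψ) = Real.sin (2 * ψ) := by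
      have h : (4 * π * (m:ℝ) * 1 + 2 * ψ) = 2 * ψ + ((2 * m : ℤ) : ℝ) * (2 * π) := by
        push_cast; ring
      rw [h, Real.sin_add_int_mul_two_pi]
    have e2 : Real.sin (4 * π * (m:ℝ) * 0 + 2 * ψ) = Real.sin (2 * ψ) := by norm_num
    rw [e1, e2]
    simp
  rw [intervalIntegral.integral_const_mul, h3]
  norm_num

end AnalysisPart

section ComplexPart
open MeasureTheory Real Complex

/-- |exp(θI) - 1| = 2|sin(θ/2)| -/
theorem abs_exp_I_sub_one (θ : ℝ) :
    ‖(Complex.exp (θ * I) - 1)‖ = 2 * |Real.sin (θ/2)| := by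
  have h1 : Complex.exp (θ * I) - 1 = ((Real.cos θ - 1 : ℝ) : ℂ) + ((Real.sin θ : ℝ) : ℂ) * I := by
    rw [Complex.exp_mul_I]
    push_cast
    ring
  rw [h1, Complex.norm_add_mul_I]
  have h2 : (Real.cos θ - 1)^2 + (Real.sin θ)^2 = (2 * |Real.sin (θ/2)|)^2 := by
    have hs : Real.sin (θ/2)^2 = 1/2 - Real.cos (2 * (θ/2)) / 2 := Real.sin_sq_eq_half_sub (θ/2)
    rw [show 2 * (θ/2) = θ by ring] at hs
    have hpyth : Real.sin θ ^2 + Real.cos θ ^2 = 1 := Real.sin_sq_add_cos_sq θ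
    have habs : |Real.sin (θ/2)|^2 = Real.sin (θ/2)^2 := sq_abs _
    nlinarith
  rw [h2, Real.sqrt_sq (by positivity)]

/-- |sin(π(p + x))| = |sin(π x)| for integer p -/
theorem abs_sin_pi_int_add (p : ℤ) (x : ℝ) :
    |Real.sin (π * (p + x))| = |Real.sin (π * x)| := by
  have h : π * (p + x) = π * x + p * π := by ring
  rw [h, Real.sin_add, Real.sin_int_mul_pi, mul_zero, add_zero, abs_mul]
  have hcos : |Real.cos ((p:ℝ) * π)| = 1 := by
    have h1 : Real.sin ((p:ℝ)*π) = 0 := Real.sin_int_mul_pi p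
    have h2 := Real.sin_sq_add_cos_sq ((p:ℝ)*π)
    rw [h1] at h2
    have : Real.cos ((p:ℝ)*π)^2 = 1 := by nlinarith
    rw [← Real.sqrt_sq_eq_abs, this, Real.sqrt_one]
  rw [hcos, mul_one]

noncomputable def Em (m : ℤ) (x : ℝ) : ℂ := Complex.exp (-(2 * π * m * x) * I)

theorem Em_cont (m : ℤ) : Continuous (Em m) := by
  unfold Em; fun_prop

theorem Em_per (m : ℤ) : Function.Periodic (Em m) 1 := by
  intro x
  unfold Em
  have h : (-(2 * π * m * ((x:ℝ)+1 : ℝ)) * I : ℂ) = -(2 * π * m * x) * I + (-m) * (2 * π * I) := by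
    push_cast; ring
  rw [show ((x + 1 : ℝ) : ℂ) = ((x:ℝ):ℂ) + 1 by push_cast; ring] at *
  rw [show (-(2 * π * (m:ℂ) * ((x:ℝ) + 1)) * I : ℂ) = -(2 * π * m * x) * I + (-m) * (2 * π * I) by push_cast; ring,
    Complex.exp_add, show (-(m:ℂ)) = ((-m : ℤ) : ℂ) by push_cast; ring,
    Complex.exp_int_mul_two_pi_mul_I, mul_one]

theorem Em_abs (m : ℤ) (x : ℝ) : ‖(Em m x)‖ = 1 := by
  unfold Em
  rw [show (-(2 * π * (m:ℂ) * x) * I) = ((-(2 * π * m * x) : ℝ) : ℂ) * I by push_cast; ring]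
  exact Complex.norm_exp_ofReal_mul_I _

/-- the shift identity -/
theorem shift_int (m : ℤ) (t : ℝ) :
    ∫ x in Set.Ico (0:ℝ) 1, (Fhalf (x + t) : ℂ) * Em m x
      = Complex.exp ((2 * π * m * t) * I) * ∫ x in Set.Ico (0:ℝ) 1, (Fhalf x : ℂ) * Em m x := by
  have hper : Function.Periodic (fun u => (Fhalf u : ℂ) * Em m u) 1 := by
    intro u
    simp only [Fhalf_per u, Em_per m u]
  have key : ∀ x : ℝ, (Fhalf (x + t) : ℂ) * Em m x
      = Complex.exp ((2 * π * m * t) * I) * ((Fhalf (x+t) : ℂ) * Em m (x+t)) := by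
    intro x
    unfold Em
    rw [show ((x + t : ℝ) : ℂ) = ((x:ℝ):ℂ) + ((t:ℝ):ℂ) by push_cast; ring]
    rw [show Complex.exp ((2*π*(m:ℂ)*t) * I) * ((Fhalf (x+t) : ℂ) * Complex.exp (-(2*π*(m:ℂ)*(((x:ℝ):ℂ)+((t:ℝ):ℂ))) * I))
      = (Fhalf (x+t) : ℂ) * (Complex.exp ((2*π*(m:ℂ)*t) * I) * Complex.exp (-(2*π*(m:ℂ)*(((x:ℝ):ℂ)+((t:ℝ):ℂ))) * I)) by ring,
      ← Complex.exp_add]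
    congr 2
    push_cast
    ring
  rw [ico_eq_intervalIntegralC, intervalIntegral.integral_congr (fun x _ => key x),
    intervalIntegral.integral_const_mul]
  congr 1
  have h1 : (∫ x in (0:ℝ)..1, (Fhalf (x+t) : ℂ) * Em m (x+t))
      = ∫ x in (0+t:ℝ)..(1+t), (Fhalf x : ℂ) * Em m x :=
    intervalIntegral.integral_comp_add_right (fun u => (Fhalf u : ℂ) * Em m u) t
  rw [h1, ico_eq_intervalIntegralC]
  have h2 := hper.intervalIntegral_add_eq t 0
  rw [show (0+t:ℝ) = t by ring, show (1+t:ℝ) = t + 1 by ring, h2]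
  norm_num

theorem ico_eq_intervalIntegralC' (h : ℝ → ℂ) (a b : ℝ) (hab : a ≤ b) :
    ∫ x in Set.Ico a b, h x = ∫ x in a..b, h x := by
  rw [intervalIntegral.integral_of_le hab,
    MeasureTheory.integral_Ico_eq_integral_Ioo, MeasureTheory.integral_Ioc_eq_integral_Ioo]

theorem bdd_integrableC {h : ℝ → ℂ} (hm : Measurable h) (C : ℝ)
    (hC : ∀ x, ‖(h x)‖ ≤ C) {s : Set ℝ} (hfin : volume s < ⊤) :
    IntegrableOn h s := by
  have hg : IntegrableOn (fun _ : ℝ => C) s := integrableOn_const hfin.ne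
  exact Integrable.mono' hg hm.aestronglyMeasurable.restrict
    (Filter.Eventually.of_forall fun x => by simpa using hC x)

theorem FE_meas (m : ℤ) : Measurable (fun x => (Fhalf x : ℂ) * Em m x) :=
  (Complex.measurable_ofReal.comp Fhalf_meas).mul (Em_cont m).measurable

theorem FE_abs (m : ℤ) (x : ℝ) : ‖((Fhalf x : ℂ) * Em m x)‖ ≤ 1 := by
  rw [norm_mul, Em_abs, mul_one, Complex.norm_real, Real.norm_eq_abs]
  exact Fhalf_abs x

/-- Fourier coefficient of Fhalf at an odd integer m -/
theorem Phi_eq (m : ℤ) (hm : Odd m) :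
    ∫ x in Set.Ico (0:ℝ) 1, (Fhalf x : ℂ) * Em m x = 4 / (2 * π * m * I) := by
  have hm0 : m ≠ 0 := by rintro rfl; exact (Int.not_odd_iff_even.mpr Even.zero) hm
  have hπ : ((π : ℝ) : ℂ) ≠ 0 := Complex.ofReal_ne_zero.mpr Real.pi_ne_zero
  have hmC : (m : ℂ) ≠ 0 := Int.cast_ne_zero.mpr hm0
  have hc0 : (-(2 * (π:ℂ) * (m:ℂ)) * I) ≠ 0 :=
    mul_ne_zero (neg_ne_zero.mpr (mul_ne_zero (mul_ne_zero two_ne_zero hπ) hmC)) Complex.I_ne_zero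
  have hsplit : Set.Ico (0:ℝ) 1 = Set.Ico (0:ℝ) (1/2) ∪ Set.Ico (1/2 : ℝ) 1 :=
    (Set.Ico_union_Ico_eq_Ico (by norm_num) (by norm_num)).symm
  have hi1 : IntegrableOn (fun x => (Fhalf x : ℂ) * Em m x) (Set.Ico (0:ℝ) (1/2)) :=
    bdd_integrableC (FE_meas m) 1 (FE_abs m) (by simp [Real.volume_Ico])
  have hi2 : IntegrableOn (fun x => (Fhalf x : ℂ) * Em m x) (Set.Ico (1/2:ℝ) 1) :=
    bdd_integrableC (FE_meas m) 1 (FE_abs m) (by simp [Real.volume_Ico])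
  rw [hsplit, setIntegral_union (by
      apply Set.disjoint_left.mpr
      rintro x ⟨_, h2⟩ ⟨h3, _⟩
      linarith) measurableSet_Ico hi1 hi2]
  have e1 : ∫ x in Set.Ico (0:ℝ) (1/2), (Fhalf x : ℂ) * Em m x
      = ∫ x in Set.Ico (0:ℝ) (1/2), Complex.exp ((-(2 * π * m) * I) * x) := by
    apply setIntegral_congr_fun measurableSet_Ico
    intro x hx
    have hfr : Int.fract x = x := Int.fract_eq_self.mpr ⟨hx.1, by linarith [hx.2]⟩
    have h1 : Fhalf x = 1 := by unfold Fhalf; rw [hfr, if_pos hx.2]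
    show (Fhalf x : ℂ) * Em m x = _
    rw [h1]
    unfold Em
    push_cast
    ring_nf
  have e2 : ∫ x in Set.Ico (1/2:ℝ) 1, (Fhalf x : ℂ) * Em m x
      = ∫ x in Set.Ico (1/2:ℝ) 1, (-1 : ℂ) * Complex.exp ((-(2 * π * m) * I) * x) := by
    apply setIntegral_congr_fun measurableSet_Ico
    intro x hx
    have hfr : Int.fract x = x := Int.fract_eq_self.mpr ⟨by linarith [hx.1], hx.2⟩
    have h1 : Fhalf x = -1 := by unfold Fhalf; rw [hfr, if_neg (not_lt.mpr hx.1)]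
    show (Fhalf x : ℂ) * Em m x = _
    rw [h1]
    unfold Em
    push_cast
    ring_nf
  rw [e1, e2]
  rw [ico_eq_intervalIntegralC' _ _ _ (by norm_num), ico_eq_intervalIntegralC' _ _ _ (by norm_num),
    intervalIntegral.integral_const_mul, integral_exp_mul_complex hc0, integral_exp_mul_complex hc0]
  have hhalf : Complex.exp ((-(2 * π * (m:ℂ)) * I) * (1/2 : ℝ)) = -1 := by
    rw [show ((-(2 * π * (m:ℂ)) * I) * ((1/2 : ℝ) : ℂ)) = ((-m : ℤ) : ℂ) * (π * I) by push_cast; ring,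
      Complex.exp_int_mul, Complex.exp_pi_mul_I]
    exact Odd.neg_one_zpow (by exact hm.neg)
  have hone : Complex.exp ((-(2 * π * (m:ℂ)) * I) * ((1 : ℝ) : ℂ)) = 1 := by
    rw [show ((-(2 * π * (m:ℂ)) * I) * ((1:ℝ) : ℂ)) = ((-m : ℤ) : ℂ) * (2 * π * I) by push_cast; ring,
      Complex.exp_int_mul_two_pi_mul_I]
  have hzero : Complex.exp ((-(2 * π * (m:ℂ)) * I) * ((0 : ℝ) : ℂ)) = 1 := by
    norm_num
  rw [hhalf, hone, hzero]
  field_simp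
  ring

theorem mode_bound (α : ℝ) (hα : Irrational α) (s : ℕ) (m p : ℤ)
    (hm : Odd m) (hmpos : 0 < m) (hθ1 : |(m:ℝ) * α - p| < 1) :
    2 * ((2 / (π * m)) * (|Real.sin (π * (s * |(m:ℝ) * α - p|))|
        / Real.sin (π * |(m:ℝ) * α - p|)))^2
      ≤ ∫ x in Set.Ico (0:ℝ) 1, (∑ j ∈ Finset.range s, Fhalf (x + (j:ℝ) * α))^2 := by
  have hm0 : m ≠ 0 := ne_of_gt hmpos
  have hmR : (0:ℝ) < (m:ℝ) := by exact_mod_cast hmpos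
  set ε : ℝ := (m:ℝ) * α - p with hε_def
  set θ : ℝ := |ε| with hθ_def
  -- θ > 0
  have hε0 : ε ≠ 0 := by
    intro h
    apply hα
    refine ⟨(p : ℚ) / (m : ℚ), ?_⟩
    have hmne : (m:ℝ) ≠ 0 := ne_of_gt hmR
    push_cast
    rw [div_eq_iff hmne]
    rw [hε_def] at h
    linarith [sub_eq_zero.mp h]
  have hθ0 : 0 < θ := abs_pos.mpr hε0
  have hsinθ : 0 < Real.sin (π * θ) := by
    apply Real.sin_pos_of_pos_of_lt_pi
    · positivity
    · nlinarith [Real.pi_pos]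
  set f : ℝ → ℝ := fun x => ∑ j ∈ Finset.range s, Fhalf (x + (j:ℝ) * α) with hf_def
  set c : ℂ := ∫ x in Set.Ico (0:ℝ) 1, (f x : ℂ) * Em m x with hc_def
  have hIco_fin : volume (Set.Ico (0:ℝ) 1) < ⊤ := by simp [Real.volume_Ico]
  have hint_j : ∀ j : ℕ, IntegrableOn (fun x => (Fhalf (x + (j:ℝ)*α) : ℂ) * Em m x)
      (Set.Ico (0:ℝ) 1) := by
    intro j
    have hmeas : Measurable (fun x : ℝ => (Fhalf (x + (j:ℝ)*α) : ℂ) * Em m x) :=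
      (Complex.measurable_ofReal.comp
        (Fhalf_meas.comp (measurable_id.add_const _))).mul (Em_cont m).measurable
    apply bdd_integrableC hmeas 1 _ hIco_fin
    intro x
    rw [norm_mul, Em_abs, mul_one, Complex.norm_real, Real.norm_eq_abs]
    exact Fhalf_abs _
  have hint_f : IntegrableOn (fun x => (f x : ℂ) * Em m x) (Set.Ico (0:ℝ) 1) := by
    have hmeas : Measurable (fun x : ℝ => (f x : ℂ) * Em m x) :=
      (Complex.measurable_ofReal.comp (f_meas α s)).mul (Em_cont m).measurable
    apply bdd_integrableC hmeas s _ hIco_fin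
    intro x
    rw [norm_mul, Em_abs, mul_one, Complex.norm_real, Real.norm_eq_abs]
    exact f_bdd α s x
  -- Step 1: compute |c|
  set z : ℂ := Complex.exp ((2 * π * m * α) * I) with hz_def
  have hz1 : z ≠ 1 := by
    intro h
    obtain ⟨n, hn⟩ := Complex.exp_eq_one_iff.mp h
    have h0 : ((2 * (π:ℂ) * m * α) * I : ℂ) = ((2 * π * ((m:ℝ) * α) : ℝ) : ℂ) * I := by
      push_cast; ring
    have h1 : ((n:ℂ) * (2 * π * I)) = ((2 * π * (n:ℝ) : ℝ) : ℂ) * I := by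
      push_cast; ring
    rw [h0, h1] at hn
    have h2 : ((2 * π * ((m:ℝ) * α) : ℝ) : ℂ) = ((2 * π * (n:ℝ) : ℝ) : ℂ) :=
      mul_right_cancel₀ Complex.I_ne_zero hn
    have h3 : (2 * π * ((m:ℝ) * α) : ℝ) = 2 * π * (n:ℝ) := Complex.ofReal_inj.mp h2
    have h4 : (m:ℝ) * α = n := mul_left_cancel₀ (by positivity : (2 * π : ℝ) ≠ 0) h3
    apply hα
    refine ⟨(n : ℚ) / (m : ℚ), ?_⟩
    have hmne : (m:ℝ) ≠ 0 := ne_of_gt hmR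
    push_cast
    rw [div_eq_iff hmne]
    linarith
  have hcsum : c = ((z^s - 1)/(z - 1)) * (4 / (2 * π * m * I)) := by
    have h1 : c = ∑ j ∈ Finset.range s,
        ∫ x in Set.Ico (0:ℝ) 1, (Fhalf (x + (j:ℝ)*α) : ℂ) * Em m x := by
      rw [hc_def, ← integral_finset_sum _ (fun j _ => hint_j j)]
      apply setIntegral_congr_fun measurableSet_Ico
      intro x _
      show (f x : ℂ) * Em m x = _
      rw [hf_def]
      push_cast
      rw [Finset.sum_mul]
    rw [h1]
    have h2 : ∀ j : ℕ, (∫ x in Set.Ico (0:ℝ) 1, (Fhalf (x + (j:ℝ)*α) : ℂ) * Em m x)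
        = z^j * (4 / (2 * π * m * I)) := by
      intro j
      rw [shift_int m ((j:ℝ)*α), Phi_eq m hm]
      congr 1
      rw [hz_def, ← Complex.exp_nat_mul]
      congr 1
      push_cast
      ring
    rw [Finset.sum_congr rfl (fun j _ => h2 j), ← Finset.sum_mul, geom_sum_eq hz1]
  have habsz : ‖(z - 1)‖ = 2 * |Real.sin (π * θ)| := by
    rw [hz_def, show ((2 * π * (m:ℂ) * α) * I) = (((2 * π * m * α : ℝ)) : ℂ) * I by push_cast; ring,
      abs_exp_I_sub_one]
    congr 1
    have : (2 * π * (m:ℝ) * α) / 2 = π * ((p:ℝ) + ε) := by rw [hε_def]; ring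
    rw [this, abs_sin_pi_int_add p ε]
    rcases abs_cases ε with ⟨h, _⟩ | ⟨h, _⟩
    · rw [hθ_def, h]
    · rw [hθ_def, h, show π * -ε = -(π * ε) by ring, Real.sin_neg, abs_neg]
  have habszs : ‖(z^s - 1)‖ = 2 * |Real.sin (π * (s * θ))| := by
    rw [hz_def, ← Complex.exp_nat_mul,
      show ((s:ℂ) * ((2 * π * (m:ℂ) * α) * I)) = (((s * (2 * π * m * α) : ℝ)) : ℂ) * I by
        push_cast; ring,
      abs_exp_I_sub_one]
    congr 1
    have : (s * (2 * π * (m:ℝ) * α)) / 2 = π * (((s*p : ℤ):ℝ) + s * ε) := by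
      rw [hε_def]; push_cast; ring
    rw [this, abs_sin_pi_int_add (s*p) (s*ε)]
    rcases abs_cases ε with ⟨h, _⟩ | ⟨h, _⟩
    · rw [hθ_def, h]
    · rw [hθ_def, h, show π * ((s:ℝ) * -ε) = -(π * (s * ε)) by ring, Real.sin_neg, abs_neg,
        show π * ((s:ℝ) * ε) = π * (s * ε) by ring]
  have habsPhi : ‖((4 : ℂ) / (2 * π * m * I))‖ = 2 / (π * m) := by
    rw [norm_div]
    have h4 : ‖(4 : ℂ)‖ = 4 := by
      rw [show (4:ℂ) = ((4:ℝ):ℂ) by norm_num, Complex.norm_real, Real.norm_eq_abs]; norm_num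
    have hden : ‖((2 * π * m * I : ℂ))‖ = 2 * π * m := by
      rw [show ((2 * π * (m:ℂ) * I)) = (((2 * π * m : ℝ)) : ℂ) * I by push_cast; ring,
        norm_mul, Complex.norm_I, mul_one, Complex.norm_real, Real.norm_eq_abs, abs_of_pos (by positivity)]
    rw [h4, hden]
    field_simp
    ring
  have habsc : ‖c‖ = (2 / (π * m)) * (|Real.sin (π * (s * θ))| / Real.sin (π * θ)) := by
    rw [hcsum, norm_mul, norm_div, habsz, habszs, habsPhi]
    rw [abs_of_pos hsinθ]
    field_simp
  -- Step 2: Bessel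
  set ψ : ℝ := Complex.arg c with hψ_def
  set w : ℂ := Complex.exp (-(ψ:ℂ) * I) with hw_def
  set g : ℝ → ℝ := fun x => Real.cos (2 * π * m * x + ψ) with hg_def
  have hg_eq : ∀ x, g x = (w * Em m x).re := by
    intro x
    rw [hg_def]
    show Real.cos _ = _
    rw [show w * Em m x = Complex.exp (((-ψ - 2 * π * m * x : ℝ) : ℂ) * I) by
      rw [hw_def]; unfold Em; rw [← Complex.exp_add]; congr 1; push_cast; ring]
    rw [Complex.exp_ofReal_mul_I_re]
    rw [show (-ψ - 2 * π * (m:ℝ) * x) = -(2 * π * m * x + ψ) by ring, Real.cos_neg]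
  have hfg : ∫ x in Set.Ico (0:ℝ) 1, f x * g x = ‖c‖ := by
    have h1 : ∀ x, f x * g x = ((w * ((f x : ℂ) * Em m x)).re) := by
      intro x
      rw [hg_eq x]
      rw [show w * ((f x : ℂ) * Em m x) = (f x : ℂ) * (w * Em m x) by ring]
      rw [Complex.re_ofReal_mul]
    rw [setIntegral_congr_fun measurableSet_Ico (fun x _ => h1 x)]
    have h2 : ∫ x in Set.Ico (0:ℝ) 1, ((w * ((f x : ℂ) * Em m x)).re)
        = (∫ x in Set.Ico (0:ℝ) 1, w * ((f x : ℂ) * Em m x)).re := by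
      exact integral_re (hint_f.const_mul _)
    rw [h2]
    have heq : (fun x => w * ((f x : ℂ) * Em m x)) = fun x => w • ((f x : ℂ) * Em m x) := rfl
    have h3 : ∫ x in Set.Ico (0:ℝ) 1, w * ((f x : ℂ) * Em m x) = w * c := by
      rw [heq, integral_smul, smul_eq_mul]
    rw [h3]
    have h4 : w * c = (‖c‖ : ℝ) := by
      have habs := Complex.norm_mul_exp_arg_mul_I c
      rw [hw_def, hψ_def]
      calc Complex.exp (-(Complex.arg c : ℂ) * I) * c
          = Complex.exp (-((Complex.arg c : ℂ) * I))
              * ((‖c‖ : ℂ) * Complex.exp ((Complex.arg c : ℂ) * I)) := by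
            rw [habs]; ring_nf
      _ = (‖c‖ : ℂ) * (Complex.exp (-((Complex.arg c:ℂ) * I))
              * Complex.exp ((Complex.arg c:ℂ) * I)) := by ring
      _ = (‖c‖ : ℂ) := by rw [← Complex.exp_add]; simp
    rw [h4, Complex.ofReal_re]
  have hgmeas : Measurable g := by rw [hg_def]; fun_prop
  have hgb : ∀ x, |g x| ≤ 1 := by
    intro x; rw [hg_def]; exact Real.abs_cos_le_one _
  have hgg : ∫ x in Set.Ico (0:ℝ) 1, (g x)^2 = 1/2 := by
    rw [hg_def]; exact cos_sq_integral m hm0 ψ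
  have hbessel := bessel (f := f) (g := g) (f_meas α s) hgmeas s (f_bdd α s) 1 hgb hgg
  rw [hfg] at hbessel
  calc 2 * ((2 / (π * m)) * (|Real.sin (π * (s * θ))| / Real.sin (π * θ)))^2
      = 2 * (‖c‖)^2 := by rw [habsc]
  _ ≤ _ := hbessel

end ComplexPart

section FinalPart
open MeasureTheory Real GenContFract

theorem caseAB (sR q θ : ℝ) (hθ : 0 < θ) (hs1 : 1 ≤ sR) (hq : 1 ≤ q) (hq2 : q ≤ 2 * sR)
    (h12 : sR * θ ≤ 1/2) :
    2/π^2 ≤ (2 / (π * q)) * (|Real.sin (π * (sR * θ))| / Real.sin (π * θ)) := by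
  have hπ := Real.pi_pos
  have hs : 0 < sR := lt_of_lt_of_le zero_lt_one hs1
  have hsin_num : 2 * (sR * θ) ≤ |Real.sin (π * (sR * θ))| := by
    have h1 : (0:ℝ) ≤ π * (sR * θ) := by positivity
    have h2 : π * (sR * θ) ≤ π/2 := by nlinarith
    have h3 := Real.mul_le_sin h1 h2
    have h4 : 2/π * (π * (sR * θ)) = 2 * (sR * θ) := by field_simp
    rw [h4] at h3
    exact le_trans h3 (le_abs_self _)
  have hθlt : θ ≤ 1/2 := by nlinarith [mul_le_mul_of_nonneg_right hs1 hθ.le]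
  have hsin_den : Real.sin (π * θ) ≤ π * θ := Real.sin_le (by positivity)
  have hsinθpos : 0 < Real.sin (π * θ) :=
    Real.sin_pos_of_pos_of_lt_pi (by positivity) (by nlinarith)
  have hratio : 2 * sR / π ≤ |Real.sin (π * (sR * θ))| / Real.sin (π * θ) := by
    rw [div_le_div_iff₀ (by positivity) hsinθpos]
    calc 2 * sR * Real.sin (π * θ) ≤ 2 * sR * (π * θ) := by nlinarith
    _ = 2 * (sR * θ) * π := by ring
    _ ≤ |Real.sin (π * (sR * θ))| * π := by nlinarith
  calc 2/π^2 ≤ (2 / (π * q)) * (2 * sR / π) := by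
        rw [div_le_iff₀ (by positivity)]
        have he : (2 / (π * q)) * (2 * sR / π) * π^2 = 4 * (sR / q) := by
          field_simp; ring
        rw [he]
        have : (1:ℝ)/2 ≤ sR / q := by
          rw [le_div_iff₀ (by linarith)]; linarith
        linarith
  _ ≤ _ := mul_le_mul_of_nonneg_left hratio (by positivity)

theorem caseC (sR q θ : ℝ) (hθ : 0 < θ) (hq : 1 ≤ q) (hlow : 1/2 < sR * θ)
    (hhigh : sR * θ < 1) (hgap : q * θ / 2 ≤ 1 - sR * θ) (hθ1 : θ < 1) :
    2/π^2 ≤ (2 / (π * q)) * (|Real.sin (π * (sR * θ))| / Real.sin (π * θ)) := by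
  have hπ := Real.pi_pos
  have hsin_num : q * θ ≤ |Real.sin (π * (sR * θ))| := by
    have heq : Real.sin (π * (sR * θ)) = Real.sin (π * (1 - sR * θ)) := by
      rw [show π * (1 - sR * θ) = π - π * (sR * θ) by ring, Real.sin_pi_sub]
    have h1 : (0:ℝ) ≤ π * (1 - sR * θ) := by nlinarith
    have h2 : π * (1 - sR * θ) ≤ π/2 := by nlinarith
    have h3 := Real.mul_le_sin h1 h2
    have h4 : 2/π * (π * (1 - sR * θ)) = 2 * (1 - sR * θ) := by field_simp
    rw [h4] at h3
    calc q * θ = 2 * (q * θ / 2) := by ring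
    _ ≤ 2 * (1 - sR * θ) := by linarith
    _ ≤ Real.sin (π * (1 - sR * θ)) := h3
    _ = Real.sin (π * (sR * θ)) := heq.symm
    _ ≤ |Real.sin (π * (sR * θ))| := le_abs_self _
  have hsin_den : Real.sin (π * θ) ≤ π * θ := Real.sin_le (by positivity)
  have hsinθpos : 0 < Real.sin (π * θ) :=
    Real.sin_pos_of_pos_of_lt_pi (by positivity) (by nlinarith)
  have hratio : q / π ≤ |Real.sin (π * (sR * θ))| / Real.sin (π * θ) := by
    rw [div_le_div_iff₀ (by positivity) hsinθpos]
    calc q * Real.sin (π * θ) ≤ q * (π * θ) := by nlinarith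
    _ = (q * θ) * π := by ring
    _ ≤ |Real.sin (π * (sR * θ))| * π := by nlinarith
  calc 2/π^2 = (2 / (π * q)) * (q / π) := by field_simp
  _ ≤ _ := mul_le_mul_of_nonneg_left hratio (by positivity)

/-- If the denominators `q_n` of the irrational `α` are odd for all `n ≥ k₀`, then
there is `δ > 0` such that for every integer `s ≥ q_{k₀}` the `L²`-norm of the
ergodic sum `φ^{(s)}` is at least `δ`. -/
theorem birkhoff_Fhalf_L2_lower_bound (α : ℝ) (hα : Irrational α) (k0 : ℕ)
    (hodd : ∀ n : ℕ, k0 ≤ n → ∃ k : ℕ, (GenContFract.of α).dens n = 2 * (k : ℝ) + 1) :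
    ∃ δ : ℝ, 0 < δ ∧ ∀ s : ℕ, (GenContFract.of α).dens k0 ≤ (s : ℝ) →
      δ ≤ Real.sqrt
          (∫ x in Set.Ico (0 : ℝ) 1,
            (∑ j ∈ Finset.range s, Fhalf (x + (j : ℝ) * α)) ^ 2) := by
  have hπ := Real.pi_pos
  refine ⟨2/π^2, by positivity, ?_⟩
  intro s hs
  apply Real.le_sqrt_of_sq_le
  -- find k with q_k ≤ s < q_{k+1}
  have hs1 : (1:ℝ) ≤ s := le_trans (myDenPos hα k0) hs
  have hgrow : ∀ t : ℕ, (GenContFract.of α).dens k0 + t ≤ (GenContFract.of α).dens (k0 + 2*t) := by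
    intro t
    induction t with
    | zero => simp
    | succ t ih =>
      have h1 := myDenRec hα (k0 + 2*t)
      have h2 := myDenPos hα (k0 + 2*t + 1)
      have : k0 + 2*(t+1) = (k0 + 2*t) + 2 := by ring
      rw [this]
      push_cast
      push_cast at ih
      linarith
  have hex : ∃ n : ℕ, (s:ℝ) < (GenContFract.of α).dens (k0 + n) := by
    refine ⟨2 * (s+1), ?_⟩
    have := hgrow (s+1)
    have h0 := myDenPos hα k0
    push_cast at this
    linarith
  set N := Nat.find hex with hN_def
  have hNspec : (s:ℝ) < (GenContFract.of α).dens (k0 + N) := Nat.find_spec hex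
  have hN0 : N ≠ 0 := by
    intro h
    rw [h] at hNspec
    simp at hNspec
    linarith
  set k := k0 + (N - 1) with hk_def
  have hk1 : k + 1 = k0 + N := by omega
  have hk0k : k0 ≤ k := by omega
  have hqk_le : (GenContFract.of α).dens k ≤ (s:ℝ) := by
    have := Nat.find_min hex (m := N - 1) (by omega)
    rw [hk_def]
    linarith [not_lt.mp this]
  have hqk1_gt : (s:ℝ) < (GenContFract.of α).dens (k+1) := by rw [hk1]; exact hNspec
  -- integer data
  obtain ⟨zq, hzq⟩ := myIntDen hα k
  obtain ⟨zq', hzq'⟩ := myIntDen hα (k+1)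
  obtain ⟨zp, hzp⟩ := myIntNum hα k
  obtain ⟨zp', hzp'⟩ := myIntNum hα (k+1)
  have hzq1 : (1:ℝ) ≤ zq := by rw [← hzq]; exact myDenPos hα k
  have hzq'1 : (1:ℝ) ≤ zq' := by rw [← hzq']; exact myDenPos hα (k+1)
  have hzqpos : 0 < zq := by exact_mod_cast lt_of_lt_of_le zero_lt_one hzq1
  have hzq'pos : 0 < zq' := by exact_mod_cast lt_of_lt_of_le zero_lt_one hzq'1
  have hodd_q : Odd zq := by
    obtain ⟨t, ht⟩ := hodd k hk0k
    refine ⟨t, ?_⟩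
    have : (zq:ℝ) = 2*t + 1 := by rw [← hzq, ht]
    exact_mod_cast this
  have hodd_q' : Odd zq' := by
    obtain ⟨t, ht⟩ := hodd (k+1) (by omega)
    refine ⟨t, ?_⟩
    have : (zq':ℝ) = 2*t + 1 := by rw [← hzq', ht]
    exact_mod_cast this
  -- thetas
  set θ1 : ℝ := |(zq:ℝ) * α - zp| with hθ1_def
  set θ2 : ℝ := |(zq':ℝ) * α - zp'| with hθ2_def
  have hθ1pos : 0 < θ1 := by
    rw [hθ1_def]
    apply abs_pos.mpr
    rw [← hzq, ← hzp]
    exact myEpsNe hα k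
  have hθ2pos : 0 < θ2 := by
    rw [hθ2_def]
    apply abs_pos.mpr
    rw [← hzq', ← hzp']
    exact myEpsNe hα (k+1)
  have hθ1le : θ1 ≤ 1 / (zq':ℝ) := by
    rw [hθ1_def, ← hzq, ← hzp, ← hzq']
    exact myThetaLe hα k
  have hθ2le : θ2 ≤ 1 / (GenContFract.of α).dens (k+2) := by
    rw [hθ2_def, ← hzq', ← hzp']
    exact myThetaLe hα (k+1)
  have hq2_ge2 : (2:ℝ) ≤ (GenContFract.of α).dens (k+2) := by
    have := myDenRec hα k
    have h1 := myDenPos hα k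
    have h2 := myDenPos hα (k+1)
    linarith
  have hθ2half : θ2 ≤ 1/2 := by
    apply le_trans hθ2le
    rw [div_le_div_iff₀ (by linarith) (by norm_num)]
    linarith
  have hkey : (zq':ℝ) * θ1 + (zq:ℝ) * θ2 ≤ 1 := by
    rw [hθ1_def, hθ2_def, ← hzq, ← hzq', ← hzp, ← hzp']
    exact myKey hα k
  -- s < zq', zq ≤ s
  have hs_lt : (s:ℝ) < zq' := by rw [← hzq']; exact hqk1_gt
  have hzq_le_s : (zq:ℝ) ≤ s := by rw [← hzq]; exact hqk_le
  have hzq'2 : (2:ℝ) ≤ zq' := by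
    have : (1:ℝ) < zq' := lt_of_le_of_lt hs1 hs_lt
    have : (1:ℤ) < zq' := by exact_mod_cast this
    exact_mod_cast this
  have hθ1lt1 : θ1 < 1 := by
    apply lt_of_le_of_lt hθ1le
    rw [div_lt_one (by linarith)]
    linarith
  have hθ2lt1 : θ2 < 1 := by linarith
  have hspos : (0:ℝ) < s := by linarith
  -- final numeric bound helper
  have hmain : ∀ X : ℝ, 2/π^2 ≤ X →
      (2 * X^2 ≤ ∫ x in Set.Ico (0:ℝ) 1, (∑ j ∈ Finset.range s, Fhalf (x + (j:ℝ) * α))^2) →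
      (2/π^2)^2 ≤ ∫ x in Set.Ico (0:ℝ) 1, (∑ j ∈ Finset.range s, Fhalf (x + (j:ℝ) * α))^2 := by
    intro X hX hI
    have hXpos : 0 < X := lt_of_lt_of_le (by positivity) hX
    have h1 : (2/π^2)^2 ≤ X^2 := by
      apply pow_le_pow_left₀ (by positivity) hX
    linarith [sq_nonneg X]
  by_cases hcase1 : (s:ℝ) * θ1 ≤ 1/2
  · -- Case A: mode q_k
    apply hmain ((2 / (π * zq)) * (|Real.sin (π * (s * θ1))| / Real.sin (π * θ1)))
    · exact caseAB s zq θ1 hθ1pos hs1 hzq1 (by linarith) hcase1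
    · exact mode_bound α hα s zq zp hodd_q hzqpos hθ1lt1
  · push_neg at hcase1
    have hshalf : (1:ℝ)/2 < s * θ1 := hcase1
    have hzq'_le_2s : (zq':ℝ) ≤ 2 * s := by
      have h1 : (s:ℝ) * θ1 ≤ s * (1/zq') :=
        mul_le_mul_of_nonneg_left hθ1le (by positivity)
      have h2 : (1:ℝ)/2 < s / zq' := by
        calc (1:ℝ)/2 < s * θ1 := hshalf
        _ ≤ s * (1/zq') := h1
        _ = s / zq' := by ring
      rw [lt_div_iff₀ (by linarith)] at h2
      linarith
    by_cases hcase2 : (s:ℝ) * θ2 ≤ 1/2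
    · -- Case B: mode q_{k+1}
      apply hmain ((2 / (π * zq')) * (|Real.sin (π * (s * θ2))| / Real.sin (π * θ2)))
      · exact caseAB s zq' θ2 hθ2pos hs1 hzq'1 hzq'_le_2s hcase2
      · exact mode_bound α hα s zq' zp' hodd_q' hzq'pos hθ2lt1
    · -- Case C: mode q_k, s θ1 ∈ (1/2, 1)
      push_neg at hcase2
      have hθ1lt2θ2 : θ1 < 2 * θ2 := by
        have h2 : 1/(zq':ℝ) < 1/(s:ℝ) :=
          div_lt_div_of_pos_left one_pos hspos hs_lt
        have h3 : 1/(s:ℝ) < 2 * θ2 := by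
          rw [div_lt_iff₀ hspos, show 2 * θ2 * (s:ℝ) = 2 * ((s:ℝ) * θ2) by ring]
          linarith [hcase2]
        linarith [hθ1le]
      have hs_le : (s:ℝ) ≤ (zq':ℝ) - 1 := by
        have h1 : (s:ℤ) < zq' := by exact_mod_cast hs_lt
        have h2 : (s:ℤ) ≤ zq' - 1 := by omega
        exact_mod_cast h2
      have hsθ1_ub : (s:ℝ) * θ1 ≤ 1 - (zq:ℝ) * θ2 - θ1 := by
        calc (s:ℝ) * θ1 ≤ ((zq':ℝ) - 1) * θ1 :=
              mul_le_mul_of_nonneg_right hs_le hθ1pos.le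
        _ = (zq':ℝ) * θ1 - θ1 := by ring
        _ ≤ 1 - (zq:ℝ) * θ2 - θ1 := by linarith [hkey]
      have hzqθ2pos : 0 < (zq:ℝ) * θ2 := by
        apply mul_pos (by linarith) hθ2pos
      have hsθ1_lt1 : (s:ℝ) * θ1 < 1 := by linarith
      have h1m : (zq:ℝ) * θ1 / 2 ≤ 1 - s * θ1 := by
        have ha : θ1/2 ≤ θ2 := by linarith
        have hb : (zq:ℝ) * (θ1/2) ≤ (zq:ℝ) * θ2 :=
          mul_le_mul_of_nonneg_left ha (by linarith)
        have hc : (zq:ℝ) * θ1 / 2 = (zq:ℝ) * (θ1/2) := by ring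
        linarith [hb]
      apply hmain ((2 / (π * zq)) * (|Real.sin (π * (s * θ1))| / Real.sin (π * θ1)))
      · exact caseC s zq θ1 hθ1pos hzq1 hshalf hsθ1_lt1 h1m hθ1lt1
      · exact mode_bound α hα s zq zp hodd_q hzqpos hθ1lt1

end FinalPart
end

section
/- Let α be irrational with denominators (q_n), let β ∈ ℝ and δ > 0 with ‖q_n β‖ ≥ δ for some fixed n. Then for every integer b with (δ/4)·q_n ≤ b ≤ (δ/2)·q_n and every integer j with |j| < b, one has ‖β − jα‖ ≥ (δ²/8)·(1/b). -/
namespace GenContFract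
lemma contsAux_a_int (v : ℝ) : ∀ n : ℕ, ∃ a : ℤ, ((GenContFract.of v).contsAux n).a = (a : ℝ) := by
  intro n
  induction n using Nat.strong_induction_on with
  | _ n ih =>
    match n with
    | 0 => exact ⟨1, by simp [contsAux]⟩
    | 1 => exact ⟨⌊v⌋, by simp [contsAux, of_h_eq_floor]⟩
    | (m + 2) =>
      obtain ⟨a₀, h₀⟩ := ih m (by omega)
      obtain ⟨a₁, h₁⟩ := ih (m+1) (by omega)
      cases hs : (GenContFract.of v).s.get? m with
      | none =>
        refine ⟨a₁, ?_⟩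
        rw [(GenContFract.of v).contsAux_stable_step_of_terminated hs, h₁]
      | some gp =>
        have hga : gp.a = 1 := of_partNum_eq_one (partNum_eq_s_a hs)
        obtain ⟨z, hz⟩ := exists_int_eq_of_partDen (partDen_eq_s_b hs)
        refine ⟨z * a₁ + a₀, ?_⟩
        rw [contsAux_recurrence hs rfl rfl]
        push_cast
        simp [hga, hz, h₀, h₁]

lemma nums_int (v : ℝ) (n : ℕ) : ∃ a : ℤ, (GenContFract.of v).nums n = (a : ℝ) :=
  contsAux_a_int v (n + 1)
end GenContFract


lemma distInt_bdd (x : ℝ) : BddBelow (Set.range fun m : ℤ => |x - m|) :=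
  ⟨0, by rintro y ⟨m, rfl⟩; positivity⟩

lemma distInt_le (x : ℝ) (m : ℤ) : distInt x ≤ |x - m| := ciInf_le (distInt_bdd x) m

lemma le_distInt {x c : ℝ} (h : ∀ m : ℤ, c ≤ |x - m|) : c ≤ distInt x := le_ciInf h

/-- If `q_n` is a denominator of the irrational `α` and `‖q_n β‖ ≥ δ > 0`, then for
every integer `b` with `(δ/4) q_n ≤ b ≤ (δ/2) q_n` and every `|j| < b`,
`‖β - j α‖ ≥ (δ²/8) / b`. -/
theorem distInt_beta_sub_mul_alpha_lower_bound (α β : ℝ) (hα : Irrational α)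
    (n q : ℕ) (hqpos : 0 < q) (hq : (q : ℝ) = (GenContFract.of α).dens n)
    (δ : ℝ) (hδ : 0 < δ) (hβ : δ ≤ distInt ((q : ℝ) * β)) :
    ∀ b : ℕ, δ / 4 * (q : ℝ) ≤ (b : ℝ) → (b : ℝ) ≤ δ / 2 * (q : ℝ) →
      ∀ j : ℤ, |j| < (b : ℤ) →
        δ ^ 2 / 8 * (1 / (b : ℝ)) ≤ distInt (β - (j : ℝ) * α) := by
  intro b hb1 hb2 j hj
  have hb0 : 0 < b := by
    by_contra h
    have : b = 0 := by omega
    subst this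
    exact absurd hj (by simp [abs_nonneg])
  have hbR : (0 : ℝ) < b := by exact_mod_cast hb0
  have hqR : (0 : ℝ) < q := by exact_mod_cast hqpos
  -- α's continued fraction does not terminate
  have hterm : ¬(GenContFract.of α).TerminatedAt n := by
    intro h
    obtain ⟨r, hr⟩ := GenContFract.exists_rat_eq_of_terminates ⟨n, h⟩
    exact hα ⟨r, hr.symm⟩
  -- approximation
  have happ := GenContFract.abs_sub_convs_le hterm
  obtain ⟨p, hp⟩ := GenContFract.nums_int α n
  have hdens1 : (q : ℝ) ≤ (GenContFract.of α).dens (n + 1) := hq ▸ GenContFract.of_den_mono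
  have hconv : (GenContFract.of α).convs n = (p : ℝ) / q := by
    rw [GenContFract.conv_eq_num_div_den, hp, hq]
  have hqα : |(q : ℝ) * α - p| ≤ 1 / q := by
    have h1 : |(q : ℝ) * α - p| = q * |α - (p : ℝ) / q| := by
      rw [← abs_of_pos hqR, ← abs_mul]
      rw [mul_sub, mul_comm]
      congr 1
      field_simp
      simp only [abs_of_pos hqR]
      ring
    rw [h1, ← hconv]
    calc (q:ℝ) * |α - (GenContFract.of α).convs n|
        ≤ q * (1 / ((GenContFract.of α).dens n * (GenContFract.of α).dens (n+1))) :=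
          mul_le_mul_of_nonneg_left happ hqR.le
      _ ≤ 1 / q := by
          rw [← hq, mul_one_div, div_le_div_iff₀ (mul_pos hqR (hqR.trans_le hdens1)) hqR]
          nlinarith
  -- main estimate
  apply le_distInt
  intro m
  set X := |β - (j : ℝ) * α - m| with hXdef
  have hX : 0 ≤ X := abs_nonneg _
  have hδk : δ ≤ |(q : ℝ) * β - ((j * p + (q : ℤ) * m : ℤ) : ℝ)| :=
    hβ.trans (distInt_le _ _)
  have hjb : |(j : ℝ)| ≤ (b : ℝ) := by
    rw [← Int.cast_abs]; exact_mod_cast hj.le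
  have h2 : |(j : ℝ) * ((q : ℝ) * α - p)| ≤ (b : ℝ) * (1 / q) := by
    rw [abs_mul]
    exact mul_le_mul hjb hqα (abs_nonneg _) hbR.le
  have h3 : (b : ℝ) * (1 / q) ≤ δ / 2 := by
    rw [mul_one_div, div_le_iff₀ hqR]
    linarith
  have expand : (q : ℝ) * (β - (j : ℝ) * α - m) =
      ((q : ℝ) * β - ((j * p + (q : ℤ) * m : ℤ) : ℝ)) - (j : ℝ) * ((q : ℝ) * α - p) := by
    push_cast; ring
  have htri : δ / 2 ≤ (q : ℝ) * X := by
    have h4 : δ / 2 ≤ |(q : ℝ) * (β - (j : ℝ) * α - m)| := by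
      rw [expand]
      calc δ / 2 ≤ |(q : ℝ) * β - ((j * p + (q : ℤ) * m : ℤ) : ℝ)|
            - |(j : ℝ) * ((q : ℝ) * α - p)| := by linarith
        _ ≤ _ := abs_sub_abs_le_abs_sub _ _
    rwa [abs_mul, abs_of_pos hqR] at h4
  have h5 : (δ / 2) / q ≤ X := by
    rw [div_le_iff₀ hqR]; linarith
  calc δ ^ 2 / 8 * (1 / b) = δ ^ 2 / (8 * b) := by ring
    _ ≤ δ / (2 * q) := by
        rw [div_le_div_iff₀ (by positivity) (by positivity)]
        nlinarith
    _ = (δ / 2) / q := by ring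
    _ ≤ X := h5
end
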